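/- Let Λ = ℕ with counting measure μ, and define P : ℕ × ℕ → ℝ by P(i,j) = 1/(i+j)^2 if |i−j| = 1 and P(i,j) = 0 otherwise, and ρ(i) = Σ_j P(i,j). Let u(i) = 2(−1)^i i. Then ∫_{ℕ²} P·|u(i)+u(j)|/2 dμ² = 2 Σ_{i≥1} 1/(2i+1)² < ∞, while ∫_ℕ ρ·|u| dμ = ∞. Hence integrability of a generalized 2-mean with respect to P dμ² does not imply integrability of its kernel with respect to the marginal ρ dμ. -/

import Mathlib

lemma csum : Summable (fun n : ℕ => 1 / (2 * (n : ℝ) + 1) ^ 2) := by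
  have hg : Summable (fun m : ℕ => 1 / (m : ℝ) ^ 2) :=
    Real.summable_one_div_nat_pow.mpr one_lt_two
  have hinj : Function.Injective (fun n : ℕ => 2 * n + 1) := by
    intro a b h; dsimp only at h; omega
  refine (hg.comp_injective hinj).congr fun n => ?_
  simp only [Function.comp_apply]
  push_cast
  ring_nf

/-- **Example.** On `ℕ` with counting measure, with
`P(i,j) = 1/(i+j)² if |i−j| = 1, else 0`, marginal `ρ(i) = ∑ⱼ P(i,j)`, and
`u(i) = 2(−1)ⁱ i`, the generalized 2-mean `(u(i)+u(j))/2` is integrable with respect to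
`P dμ²` (indeed `∫ P |G_{2,1}u| = 2 ∑_{i≥1} 1/(2i+1)² < ∞`), but the kernel `u` is not
integrable with respect to `ρ dμ`. -/
theorem counterexample_integrability
    (P : ℕ → ℕ → ℝ) (ρ u : ℕ → ℝ)
    (hP : ∀ i j, P i j = if |(i : ℤ) - (j : ℤ)| = 1 then 1 / ((i : ℝ) + (j : ℝ)) ^ 2 else 0)
    (hρ : ∀ i, ρ i = ∑' j, P i j)
    (hu : ∀ i, u i = 2 * (-1 : ℝ) ^ i * i) :
    Summable (fun p : ℕ × ℕ => P p.1 p.2 * |(u p.1 + u p.2) / 2|) ∧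
    (∑' p : ℕ × ℕ, P p.1 p.2 * |(u p.1 + u p.2) / 2|) = 2 * ∑' i : ℕ, 1 / ((2 * (i : ℝ) + 1)) ^ 2 ∧
    ¬ Summable (fun i : ℕ => ρ i * |u i|) := by
  have habs_lem : ∀ i j : ℕ, |(i : ℤ) - (j : ℤ)| = 1 ↔ (j = i + 1 ∨ i = j + 1) := by
    intro i j
    rw [abs_eq (by norm_num : (0:ℤ) ≤ 1)]
    omega
  set c : ℕ → ℝ := fun n => 1 / (2 * (n : ℝ) + 1) ^ 2 with hc
  have habs1 : ∀ i : ℕ, |(u i + u (i + 1)) / 2| = 1 := by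
    intro i
    have : (u i + u (i + 1)) / 2 = -(-1 : ℝ) ^ i := by
      rw [hu, hu, pow_succ]
      push_cast
      ring
    rw [this, abs_neg, abs_pow, abs_neg, abs_one, one_pow]
  -- integrand equals P
  have hfP : ∀ p : ℕ × ℕ, P p.1 p.2 * |(u p.1 + u p.2) / 2| = P p.1 p.2 := by
    rintro ⟨i, j⟩
    by_cases h : |(i : ℤ) - (j : ℤ)| = 1
    · rcases (habs_lem i j).mp h with rfl | rfl
      · simp [habs1 i]
      · rw [show u (j + 1) + u j = u j + u (j + 1) by ring, habs1 j, mul_one]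
    · simp [hP, h]
  -- splitting of P
  set a : ℕ × ℕ → ℝ := fun p => if p.2 = p.1 + 1 then c p.1 else 0 with ha
  set b : ℕ × ℕ → ℝ := fun p => if p.1 = p.2 + 1 then c p.2 else 0 with hb
  have hsplit : ∀ p : ℕ × ℕ, P p.1 p.2 = a p + b p := by
    rintro ⟨i, j⟩
    rw [hP]
    simp only [ha, hb, hc]
    by_cases h1 : j = i + 1
    · subst h1
      rw [if_pos ((habs_lem i (i + 1)).mpr (Or.inl rfl)), if_pos rfl, if_neg (by omega)]
      push_cast
      ring_nf
    · by_cases h2 : i = j + 1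
      · subst h2
        rw [if_pos ((habs_lem (j + 1) j).mpr (Or.inr rfl)), if_neg (by omega), if_pos rfl]
        push_cast
        ring_nf
      · rw [if_neg (fun h => by rcases (habs_lem i j).mp h with h | h <;> omega),
          if_neg h1, if_neg h2]
        norm_num
  have hca : Summable c := csum
  have e1 : Function.Injective (fun n : ℕ => ((n, n + 1) : ℕ × ℕ)) := by
    intro x y h; simpa using congrArg Prod.fst h
  have e2 : Function.Injective (fun n : ℕ => ((n + 1, n) : ℕ × ℕ)) := by
    intro x y h; simpa using congrArg Prod.snd h
  have hr1 : ∀ p ∉ Set.range (fun n : ℕ => ((n, n + 1) : ℕ × ℕ)), a p = 0 := by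
    rintro ⟨i, j⟩ hp
    rw [ha]
    simp only
    rw [if_neg]
    intro h
    exact hp ⟨i, by simp [h]⟩
  have hr2 : ∀ p ∉ Set.range (fun n : ℕ => ((n + 1, n) : ℕ × ℕ)), b p = 0 := by
    rintro ⟨i, j⟩ hp
    rw [hb]
    simp only
    rw [if_neg]
    intro h
    exact hp ⟨j, by simp [h]⟩
  have hsup1 : Function.support a ⊆ Set.range (fun n : ℕ => ((n, n + 1) : ℕ × ℕ)) := by
    intro p hp
    by_contra hn
    exact hp (hr1 p hn)
  have hsup2 : Function.support b ⊆ Set.range (fun n : ℕ => ((n + 1, n) : ℕ × ℕ)) := by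
    intro p hp
    by_contra hn
    exact hp (hr2 p hn)
  have hcomp1 : (a ∘ fun n : ℕ => ((n, n + 1) : ℕ × ℕ)) = c := by
    funext n; simp [ha]
  have hcomp2 : (b ∘ fun n : ℕ => ((n + 1, n) : ℕ × ℕ)) = c := by
    funext n; simp [hb]
  have hsa : Summable a := (e1.summable_iff hr1).mp (hcomp1 ▸ hca)
  have hsb : Summable b := (e2.summable_iff hr2).mp (hcomp2 ▸ hca)
  have hta : ∑' p, a p = ∑' n, c n := by
    rw [← e1.tsum_eq hsup1]
    exact tsum_congr fun n => congrFun hcomp1 n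
  have htb : ∑' p, b p = ∑' n, c n := by
    rw [← e2.tsum_eq hsup2]
    exact tsum_congr fun n => congrFun hcomp2 n
  have hsP : Summable (fun p : ℕ × ℕ => P p.1 p.2) :=
    (hsa.add hsb).congr fun p => (hsplit p).symm
  refine ⟨(hsP.congr fun p => (hfP p).symm), ?_, ?_⟩
  · calc ∑' p : ℕ × ℕ, P p.1 p.2 * |(u p.1 + u p.2) / 2|
        = ∑' p : ℕ × ℕ, (a p + b p) := tsum_congr fun p => (hfP p).trans (hsplit p)
      _ = ∑' p, a p + ∑' p, b p := Summable.tsum_add hsa hsb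
      _ = 2 * ∑' n, c n := by rw [hta, htb]; ring
  · -- non-summability
    intro hsum
    apply Real.not_summable_one_div_natCast
    have key : ∀ i : ℕ, (2 / 9) * (1 / (i : ℝ)) ≤ ρ i * |u i| := by
      intro i
      rcases Nat.eq_zero_or_pos i with rfl | hi
      · simp [hu]
      · have hrow : Summable (fun j => P i j) := by
          apply summable_of_ne_finset_zero (s := {i - 1, i + 1})
          intro j hj
          simp only [Finset.mem_insert, Finset.mem_singleton] at hj
          rw [hP, if_neg]
          intro h
          rcases (habs_lem i j).mp h with h | h <;> omega
        have hρge : c i ≤ ρ i := by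
          rw [hρ]
          have hle := Summable.le_tsum hrow (i + 1) (fun j _ => by
            rw [hP]
            split_ifs with h
            · positivity
            · exact le_rfl)
          refine le_trans (le_of_eq ?_) hle
          rw [hP, if_pos ((habs_lem i (i + 1)).mpr (Or.inl rfl))]
          simp only [hc]
          push_cast
          ring_nf
        have huabs : |u i| = 2 * i := by
          rw [hu, abs_mul, abs_mul, abs_two, abs_pow, abs_neg, abs_one, one_pow,
            mul_one, Nat.abs_cast]
        have hin : (1 : ℝ) ≤ (i : ℝ) := by exact_mod_cast hi
        have step : (2 / 9 : ℝ) * (1 / (i : ℝ)) ≤ c i * (2 * (i : ℝ)) := by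
          rw [hc]
          simp only
          rw [mul_one_div, one_div_mul_eq_div,
            div_le_div_iff₀ (by linarith) (by positivity)]
          nlinarith [sq_nonneg ((i : ℝ) - 1)]
        rw [huabs]
        exact step.trans (mul_le_mul_of_nonneg_right hρge (by positivity))
    have h2 : Summable (fun i : ℕ => (2 / 9 : ℝ) * (1 / (i : ℝ))) :=
      Summable.of_nonneg_of_le (fun i => by positivity) key hsum
    refine (h2.mul_left (9 / 2 : ℝ)).congr fun i => ?_
    ring
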